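/- The minimal non-faces of the boundary complex of the cyclic polytope C_{2n−4}(2n) are exactly the (n−1)-subsets η of [2n] for which the induced subgraph C_{2n}(η) of the 2n-cycle has exactly n−1 connected components (i.e., η contains no two cyclically adjacent elements). -/

import Mathlib

/-- The cycle graph on `ZMod N` with edges `{v, v+1}`. -/
def cycGraph (N : ℕ) : SimpleGraph (ZMod N) where
  Adj v w := v ≠ w ∧ (w = v + 1 ∨ v = w + 1)
  symm := ⟨fun v w h => ⟨h.1.symm, h.2.symm⟩⟩
  loopless := ⟨fun v h => h.1 rfl⟩

/-- `ω(σ)`: the number of odd-sized connected components of the subgraph of the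
cycle graph induced by `σ`. -/
noncomputable def omegaOdd (N : ℕ) (σ : Finset (ZMod N)) : ℕ :=
  Nat.card {C : ((cycGraph N).induce (σ : Set (ZMod N))).ConnectedComponent //
    Odd (Nat.card C.supp)}

/-- The `i`-th point on the moment curve in `ℝ^d`, `x_i = (i, i², …, i^d)`; the vertex
`v : ZMod N` is labelled `i = v.val + 1 ∈ {1,…,N}`. -/
noncomputable def moment (N d : ℕ) (v : ZMod N) : Fin d → ℝ :=
  fun t => ((v.val : ℝ) + 1) ^ ((t : ℕ) + 1)

set_option linter.unusedSectionVars false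
set_option maxHeartbeats 1000000

open Finset SimpleGraph

namespace CycAux

variable {N : ℕ} [NeZero N]

lemma natCast_inj_lt {i j : ℕ} (hi : i < N) (hj : j < N) (h : (i : ZMod N) = j) : i = j := by
  rw [← ZMod.val_cast_of_lt hi, ← ZMod.val_cast_of_lt hj, h]

lemma exists_gapF (σ : Finset (ZMod N)) (hσ : σ ≠ Finset.univ) (v : ZMod N) :
    ∃ j : ℕ, 0 < j ∧ v + (j : ZMod N) ∉ σ := by
  obtain ⟨w, hw⟩ : ∃ w, w ∉ σ := by
    by_contra h; push_neg at h; exact hσ (Finset.eq_univ_iff_forall.2 h)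
  have hN : 0 < N := Nat.pos_of_ne_zero (NeZero.ne N)
  refine ⟨(w - v).val + N, by omega, ?_⟩
  have h1 : (((w - v).val + N : ℕ) : ZMod N) = w - v := by
    push_cast [ZMod.natCast_self, ZMod.natCast_val, ZMod.cast_id]
    ring
  rw [h1]
  simpa using hw

lemma exists_gapB (σ : Finset (ZMod N)) (hσ : σ ≠ Finset.univ) (v : ZMod N) :
    ∃ j : ℕ, 0 < j ∧ v - (j : ZMod N) ∉ σ := by
  obtain ⟨w, hw⟩ : ∃ w, w ∉ σ := by
    by_contra h; push_neg at h; exact hσ (Finset.eq_univ_iff_forall.2 h)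
  have hN : 0 < N := Nat.pos_of_ne_zero (NeZero.ne N)
  refine ⟨(v - w).val + N, by omega, ?_⟩
  have h1 : (((v - w).val + N : ℕ) : ZMod N) = v - w := by
    push_cast [ZMod.natCast_self, ZMod.natCast_val, ZMod.cast_id]
    ring
  rw [h1]
  simpa using hw

/-- least `j ≥ 1` with `v + j ∉ σ` (forward gap distance). -/
def gg (σ : Finset (ZMod N)) (hσ : σ ≠ Finset.univ) (v : ZMod N) : ℕ :=
  Nat.find (exists_gapF σ hσ v)

/-- least `j ≥ 1` with `v - j ∉ σ` (backward gap distance). -/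
def bb (σ : Finset (ZMod N)) (hσ : σ ≠ Finset.univ) (v : ZMod N) : ℕ :=
  Nat.find (exists_gapB σ hσ v)

variable {σ : Finset (ZMod N)} (hσ : σ ≠ Finset.univ)

lemma gg_pos (v : ZMod N) : 0 < gg σ hσ v := (Nat.find_spec (exists_gapF σ hσ v)).1

lemma gg_spec (v : ZMod N) : v + (gg σ hσ v : ZMod N) ∉ σ :=
  (Nat.find_spec (exists_gapF σ hσ v)).2

lemma mem_of_lt_gg {v : ZMod N} (hv : v ∈ σ) {j : ℕ} (hj : j < gg σ hσ v) :
    v + (j : ZMod N) ∈ σ := by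
  rcases Nat.eq_zero_or_pos j with rfl | hj0
  · simpa using hv
  · by_contra h
    exact Nat.find_min (exists_gapF σ hσ v) hj ⟨hj0, h⟩

lemma bb_pos (v : ZMod N) : 0 < bb σ hσ v := (Nat.find_spec (exists_gapB σ hσ v)).1

lemma bb_spec (v : ZMod N) : v - (bb σ hσ v : ZMod N) ∉ σ :=
  (Nat.find_spec (exists_gapB σ hσ v)).2

lemma mem_of_lt_bb {v : ZMod N} (hv : v ∈ σ) {j : ℕ} (hj : j < bb σ hσ v) :
    v - (j : ZMod N) ∈ σ := by
  rcases Nat.eq_zero_or_pos j with rfl | hj0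
  · simpa using hv
  · by_contra h
    exact Nat.find_min (exists_gapB σ hσ v) hj ⟨hj0, h⟩

lemma gg_succ {v : ZMod N} (h1 : v + 1 ∈ σ) : gg σ hσ v = gg σ hσ (v + 1) + 1 := by
  rw [gg, Nat.find_eq_iff]
  constructor
  · refine ⟨by omega, ?_⟩
    have := gg_spec hσ (v + 1)
    have hc : ((gg σ hσ (v+1) + 1 : ℕ) : ZMod N) = (gg σ hσ (v+1) : ZMod N) + 1 := by push_cast; ring
    rw [hc]
    convert this using 2
    ring
  · rintro j hj ⟨hj0, hjs⟩
    apply hjs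
    rcases Nat.eq_or_lt_of_le hj0 with h | h
    · simpa [← h] using h1
    · have h2 : v + (j : ZMod N) = (v + 1) + ((j - 1 : ℕ) : ZMod N) := by
        have : ((j : ℕ) : ZMod N) = ((j - 1 : ℕ) : ZMod N) + 1 := by
          conv_lhs => rw [show j = (j - 1) + 1 by omega]
          push_cast; ring
        rw [this]; ring
      rw [h2]
      exact mem_of_lt_gg hσ h1 (by omega)

lemma bb_le (v : ZMod N) : bb σ hσ v ≤ N := by
  obtain ⟨w, hw⟩ : ∃ w, w ∉ σ := by
    by_contra h; push_neg at h; exact hσ (Finset.eq_univ_iff_forall.2 h)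
  rcases eq_or_ne w v with rfl | hne
  · apply Nat.find_le
    refine ⟨Nat.pos_of_ne_zero (NeZero.ne N), ?_⟩
    simpa [ZMod.natCast_self] using hw
  · have hval : 0 < (v - w).val := by
      rcases Nat.eq_zero_or_pos (v - w).val with h0 | h
      · exact absurd (sub_eq_zero.mp ((ZMod.val_eq_zero _).mp h0)).symm hne
      · exact h
    calc bb σ hσ v ≤ (v - w).val := by
          apply Nat.find_le
          refine ⟨hval, ?_⟩
          have : (((v - w).val : ℕ) : ZMod N) = v - w := by
            simp [ZMod.natCast_val, ZMod.cast_id]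
          rw [this]
          simpa using hw
      _ ≤ N := le_of_lt (ZMod.val_lt _)


section
variable [Fact (1 < N)]

/-- the "right end" of the arc of `v`. -/
def ee (σ : Finset (ZMod N)) (hσ : σ ≠ Finset.univ) (v : ZMod N) : ZMod N :=
  v + ((gg σ hσ v - 1 : ℕ) : ZMod N)

lemma ee_mem {v : ZMod N} (hv : v ∈ σ) : ee σ hσ v ∈ σ := by
  have := gg_pos hσ v
  exact mem_of_lt_gg hσ hv (by omega)

lemma ee_add_one_not_mem (v : ZMod N) : ee σ hσ v + 1 ∉ σ := by
  have h : ee σ hσ v + 1 = v + ((gg σ hσ v : ℕ) : ZMod N) := by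
    rw [ee]
    have := gg_pos hσ v
    conv_rhs => rw [show gg σ hσ v = (gg σ hσ v - 1) + 1 by omega]
    push_cast
    ring
  rw [h]
  exact gg_spec hσ v

lemma ee_eq_self {v : ZMod N} (h1 : v + 1 ∉ σ) : ee σ hσ v = v := by
  have hg : gg σ hσ v = 1 := by
    rw [gg, Nat.find_eq_iff]
    exact ⟨⟨one_pos, by simpa using h1⟩, by omega⟩
  simp [ee, hg]

lemma ee_succ {v : ZMod N} (h1 : v + 1 ∈ σ) : ee σ hσ v = ee σ hσ (v + 1) := by
  rw [ee, ee, gg_succ hσ h1]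
  have := gg_pos hσ (v + 1)
  rw [show gg σ hσ (v+1) + 1 - 1 = (gg σ hσ (v+1) - 1) + 1 by omega]
  push_cast
  ring

lemma reachable_add {v w : ZMod N} (k : ℕ) (hv : v ∈ σ) (hw : w ∈ σ)
    (hvw : w = v + (k : ZMod N)) (hk : ∀ j ≤ k, v + (j : ZMod N) ∈ σ) :
    ((cycGraph N).induce (σ : Set (ZMod N))).Reachable
      ⟨v, Finset.mem_coe.mpr hv⟩ ⟨w, Finset.mem_coe.mpr hw⟩ := by
  induction k generalizing w with
  | zero =>
    have : w = v := by simpa using hvw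
    subst this
    exact Reachable.refl _
  | succ k ih =>
    have hvk : v + (k : ZMod N) ∈ σ := hk k (by omega)
    refine Reachable.trans (ih hvk rfl fun j hj => hk j (by omega)) (Adj.reachable ?_)
    show (cycGraph N).Adj (v + (k : ZMod N)) w
    have hne : v + (k : ZMod N) ≠ w := by
      rw [hvw]
      push_cast
      rw [← add_assoc]
      intro h
      exact one_ne_zero (left_eq_add.mp h)
    refine ⟨hne, Or.inl ?_⟩
    rw [hvw]; push_cast; ring

lemma ee_eq_of_adj {u w : ZMod N} (hu : u ∈ σ) (hw : w ∈ σ)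
    (h : (cycGraph N).Adj u w) : ee σ hσ u = ee σ hσ w := by
  rcases h.2 with h1 | h1
  · subst h1; exact ee_succ hσ hw
  · subst h1; exact (ee_succ hσ hu).symm

lemma ee_eq_of_walk {x y : (σ : Set (ZMod N))}
    (p : ((cycGraph N).induce (σ : Set (ZMod N))).Walk x y) :
    ee σ hσ ↑x = ee σ hσ ↑y := by
  induction p with
  | nil => rfl
  | @cons a b c h p ih =>
    have hadj : (cycGraph N).Adj ↑a ↑b := h
    exact (ee_eq_of_adj hσ (Finset.mem_coe.mp a.2) (Finset.mem_coe.mp b.2) hadj).trans ih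

/-- the end of a connected component. -/
noncomputable def chi : ((cycGraph N).induce (σ : Set (ZMod N))).ConnectedComponent → ZMod N :=
  ConnectedComponent.lift (fun x => ee σ hσ ↑x) (fun _ _ p _ => ee_eq_of_walk hσ p)

lemma chi_mk (x : (σ : Set (ZMod N))) :
    chi hσ (((cycGraph N).induce (σ : Set (ZMod N))).connectedComponentMk x) = ee σ hσ ↑x := rfl

lemma reachable_ee {v : ZMod N} (hv : v ∈ σ) :
    ((cycGraph N).induce (σ : Set (ZMod N))).Reachable
      ⟨v, Finset.mem_coe.mpr hv⟩ ⟨ee σ hσ v, Finset.mem_coe.mpr (ee_mem hσ hv)⟩ := by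
  refine reachable_add (gg σ hσ v - 1) hv (ee_mem hσ hv) rfl fun j hj => ?_
  have := gg_pos hσ v
  exact mem_of_lt_gg hσ hv (by omega)

lemma reachable_iff_ee {u w : ZMod N} (hu : u ∈ σ) (hw : w ∈ σ) :
    ((cycGraph N).induce (σ : Set (ZMod N))).Reachable
      ⟨u, Finset.mem_coe.mpr hu⟩ ⟨w, Finset.mem_coe.mpr hw⟩ ↔ ee σ hσ u = ee σ hσ w := by
  constructor
  · intro h
    exact h.elim fun p => ee_eq_of_walk hσ p
  · intro h
    have h2 := (reachable_ee hσ hw).symm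
    have heq : (⟨ee σ hσ w, Finset.mem_coe.mpr (ee_mem hσ hw)⟩ : (σ : Set (ZMod N)))
        = ⟨ee σ hσ u, Finset.mem_coe.mpr (ee_mem hσ hu)⟩ := Subtype.ext h.symm
    rw [heq] at h2
    exact (reachable_ee hσ hu).trans h2

/-- the finset of right ends of arcs. -/
def Ends (σ : Finset (ZMod N)) : Finset (ZMod N) := σ.filter (fun v => v + 1 ∉ σ)

lemma mem_Ends {v : ZMod N} : v ∈ Ends σ ↔ v ∈ σ ∧ v + 1 ∉ σ := Finset.mem_filter

lemma ee_mem_Ends {v : ZMod N} (hv : v ∈ σ) : ee σ hσ v ∈ Ends σ :=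
  mem_Ends.mpr ⟨ee_mem hσ hv, ee_add_one_not_mem hσ v⟩

/-- components are classified by their ends. -/
noncomputable def compEquiv :
    ((cycGraph N).induce (σ : Set (ZMod N))).ConnectedComponent ≃ {v // v ∈ Ends σ} where
  toFun C := ⟨chi hσ C, by
    induction C using ConnectedComponent.ind with
    | _ x => exact chi_mk hσ x ▸ ee_mem_Ends hσ (Finset.mem_coe.mp x.2)⟩
  invFun v := ((cycGraph N).induce (σ : Set (ZMod N))).connectedComponentMk
    ⟨v.1, Finset.mem_coe.mpr (mem_Ends.mp v.2).1⟩
  left_inv := by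
    intro C
    induction C using ConnectedComponent.ind with
    | _ x =>
      apply ConnectedComponent.sound
      have hx : (x : ZMod N) ∈ σ := Finset.mem_coe.mp x.2
      have h2 := (reachable_ee hσ hx).symm
      have hx2 : (⟨↑x, Finset.mem_coe.mpr hx⟩ : (σ : Set (ZMod N))) = x := Subtype.ext rfl
      rw [hx2] at h2
      exact h2
  right_inv := by
    intro v
    obtain ⟨hv1, hv2⟩ := mem_Ends.mp v.2
    apply Subtype.ext
    exact ee_eq_self hσ hv2

lemma reachable_iff_ee' {u w : (σ : Set (ZMod N))} :
    ((cycGraph N).induce (σ : Set (ZMod N))).Reachable u w ↔ ee σ hσ ↑u = ee σ hσ ↑w := by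
  constructor
  · intro h
    exact h.elim fun p => ee_eq_of_walk hσ p
  · intro h
    have hu : (u : ZMod N) ∈ σ := Finset.mem_coe.mp u.2
    have hw : (w : ZMod N) ∈ σ := Finset.mem_coe.mp w.2
    have h2 := (reachable_iff_ee hσ hu hw).mpr h
    have e1 : (⟨↑u, Finset.mem_coe.mpr hu⟩ : (σ : Set (ZMod N))) = u := Subtype.ext rfl
    have e2 : (⟨↑w, Finset.mem_coe.mpr hw⟩ : (σ : Set (ZMod N))) = w := Subtype.ext rfl
    rwa [e1, e2] at h2

lemma gg_sub {v : ZMod N} (hv : v ∈ Ends σ) {j : ℕ} (hj : j < bb σ hσ v) :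
    gg σ hσ (v - (j : ZMod N)) = j + 1 := by
  obtain ⟨hv1, hv2⟩ := mem_Ends.mp hv
  rw [gg, Nat.find_eq_iff]
  refine ⟨⟨by omega, ?_⟩, ?_⟩
  · have h1 : v - (j : ZMod N) + ((j + 1 : ℕ) : ZMod N) = v + 1 := by push_cast; ring
    rw [h1]; exact hv2
  · rintro i hi ⟨hi0, his⟩
    apply his
    have h2 : v - (j : ZMod N) + (i : ZMod N) = v - ((j - i : ℕ) : ZMod N) := by
      have h3 : ((j : ℕ) : ZMod N) = ((j - i : ℕ) : ZMod N) + (i : ZMod N) := by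
        rw [← Nat.cast_add]; congr 1; omega
      rw [h3]; ring
    rw [h2]
    exact mem_of_lt_bb hσ hv1 (by omega)

lemma ee_sub {v : ZMod N} (hv : v ∈ Ends σ) {j : ℕ} (hj : j < bb σ hσ v) :
    ee σ hσ (v - (j : ZMod N)) = v := by
  rw [ee, gg_sub hσ hv hj]
  simp

lemma eq_sub {u v : ZMod N} (hv : ee σ hσ u = v) :
    u = v - ((gg σ hσ u - 1 : ℕ) : ZMod N) := by
  rw [← hv, ee]; ring

lemma ggsub1_lt {u v : ZMod N} (hu : u ∈ σ) (hv : ee σ hσ u = v) :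
    gg σ hσ u - 1 < bb σ hσ v := by
  by_contra hcon
  push_neg at hcon
  apply bb_spec hσ v
  have hgp := gg_pos hσ u
  set b := bb σ hσ v with hb
  have h4 : v = u + ((gg σ hσ u - 1 : ℕ) : ZMod N) := by rw [← hv]; rfl
  have h3 : ((gg σ hσ u - 1 : ℕ) : ZMod N)
      = ((gg σ hσ u - 1 - b : ℕ) : ZMod N) + ((b : ℕ) : ZMod N) := by
    rw [← Nat.cast_add]; congr 1; omega
  have h1 : v - ((b : ℕ) : ZMod N) = u + ((gg σ hσ u - 1 - b : ℕ) : ZMod N) := by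
    rw [h4, h3]; ring
  rw [h1]
  exact mem_of_lt_gg hσ hu (by omega)

lemma card_supp (C : ((cycGraph N).induce (σ : Set (ZMod N))).ConnectedComponent) :
    Nat.card C.supp = bb σ hσ (chi hσ C) := by
  induction C using ConnectedComponent.ind with
  | _ x =>
  have hx : (x : ZMod N) ∈ σ := Finset.mem_coe.mp x.2
  have hvE : ee σ hσ ↑x ∈ Ends σ := ee_mem_Ends hσ hx
  have hvm : ee σ hσ ↑x ∈ σ := (mem_Ends.mp hvE).1
  have key : ∀ u : (σ : Set (ZMod N)),
      ((cycGraph N).induce (σ : Set (ZMod N))).connectedComponentMk u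
        = ((cycGraph N).induce (σ : Set (ZMod N))).connectedComponentMk x
      ↔ ee σ hσ ↑u = ee σ hσ ↑x := by
    intro u
    rw [ConnectedComponent.eq]
    exact reachable_iff_ee' hσ
  have e : (((cycGraph N).induce (σ : Set (ZMod N))).connectedComponentMk x).supp
      ≃ Fin (bb σ hσ (ee σ hσ ↑x)) := by
    refine ⟨fun u => ⟨gg σ hσ ↑u.1 - 1, ?_⟩, fun j => ⟨⟨ee σ hσ ↑x - (j : ZMod N),
        Finset.mem_coe.mpr (mem_of_lt_bb hσ hvm j.2)⟩, ?_⟩, ?_, ?_⟩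
    · exact ggsub1_lt hσ (Finset.mem_coe.mp u.1.2) ((key u.1).mp u.2)
    · show _ ∈ (((cycGraph N).induce (σ : Set (ZMod N))).connectedComponentMk x).supp
      rw [ConnectedComponent.mem_supp_iff, key]
      exact ee_sub hσ hvE j.2
    · intro u
      apply Subtype.ext
      apply Subtype.ext
      exact (eq_sub hσ ((key u.1).mp u.2)).symm
    · intro j
      apply Fin.ext
      show gg σ hσ (ee σ hσ ↑x - (j : ZMod N)) - 1 = (j : ℕ)
      rw [gg_sub hσ hvE j.2]
      omega
  rw [Nat.card_congr e, Nat.card_eq_fintype_card, Fintype.card_fin]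
  rfl

include hσ in
lemma omega_eq :
    omegaOdd N σ = ((Ends σ).filter (fun v => Odd (bb σ hσ v))).card := by
  rw [omegaOdd]
  have e1 : {C : ((cycGraph N).induce (σ : Set (ZMod N))).ConnectedComponent //
      Odd (Nat.card C.supp)} ≃ {v : {v // v ∈ Ends σ} // Odd (bb σ hσ ↑v)} :=
    Equiv.subtypeEquiv (compEquiv hσ) (fun C => by rw [card_supp hσ C]; rfl)
  have e2 : {v : {v // v ∈ Ends σ} // Odd (bb σ hσ ↑v)}
      ≃ {v // v ∈ (Ends σ).filter (fun v => Odd (bb σ hσ v))} :=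
    (Equiv.subtypeSubtypeEquivSubtypeInter (· ∈ Ends σ) (fun v => Odd (bb σ hσ v))).trans
      (Equiv.subtypeEquivRight (fun v => by simp [Finset.mem_filter]))
  rw [Nat.card_congr (e1.trans e2), Nat.card_eq_fintype_card, Fintype.card_coe]

include hσ in
lemma card_components :
    Nat.card ((cycGraph N).induce (σ : Set (ZMod N))).ConnectedComponent = (Ends σ).card := by
  rw [Nat.card_congr (compEquiv hσ), Nat.card_eq_fintype_card, Fintype.card_coe]

lemma card_even_range (L : ℕ) :
    ((Finset.range L).filter (fun j => Even j)).card = (L + 1) / 2 := by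
  induction L with
  | zero => simp
  | succ L ih =>
    rw [Finset.range_add_one, Finset.filter_insert]
    by_cases h : Even L
    · rw [if_pos h, Finset.card_insert_of_notMem (by simp), ih]
      obtain ⟨k, hk⟩ := h
      omega
    · rw [if_neg h, ih]
      have hodd : Odd L := Nat.not_even_iff_odd.mp h
      obtain ⟨k, hk⟩ := hodd
      omega

lemma fiber_eq {v : ZMod N} (hv : v ∈ Ends σ) :
    σ.filter (fun u => ee σ hσ u = v)
      = (Finset.range (bb σ hσ v)).image (fun j : ℕ => v - (j : ZMod N)) := by
  ext u
  simp only [Finset.mem_filter, Finset.mem_image, Finset.mem_range]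
  constructor
  · rintro ⟨hu, he⟩
    exact ⟨gg σ hσ u - 1, ggsub1_lt hσ hu he, (eq_sub hσ he).symm⟩
  · rintro ⟨j, hj, rfl⟩
    exact ⟨mem_of_lt_bb hσ (mem_Ends.mp hv).1 hj, ee_sub hσ hv hj⟩

lemma injOn_sub {v : ZMod N} {L : ℕ} (hL : L ≤ N) :
    Set.InjOn (fun j : ℕ => v - (j : ZMod N)) (Finset.range L : Set ℕ) := by
  intro i hi j hj hij
  have hi' : i < L := Finset.mem_range.mp (Finset.mem_coe.mp hi)
  have hj' : j < L := Finset.mem_range.mp (Finset.mem_coe.mp hj)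
  simp only at hij
  have h2 : (i : ZMod N) = (j : ZMod N) := by
    calc (i : ZMod N) = v - (v - (i : ZMod N)) := by ring
      _ = v - (v - (j : ZMod N)) := by rw [hij]
      _ = j := by ring
  exact natCast_inj_lt (lt_of_lt_of_le hi' hL) (lt_of_lt_of_le hj' hL) h2

lemma card_fiber {v : ZMod N} (hv : v ∈ Ends σ) :
    (σ.filter (fun u => ee σ hσ u = v)).card = bb σ hσ v := by
  rw [fiber_eq hσ hv,
    Finset.card_image_of_injOn (injOn_sub (bb_le hσ v)),
    Finset.card_range]

include hσ in
lemma card_eq_sum_bb : σ.card = ∑ v ∈ Ends σ, bb σ hσ v := by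
  rw [Finset.card_eq_sum_card_fiberwise (f := ee σ hσ) (t := Ends σ)
    (fun x hx => ee_mem_Ends hσ hx)]
  exact Finset.sum_congr rfl fun v hv => card_fiber hσ hv

lemma fiberOdd_eq {v : ZMod N} (hv : v ∈ Ends σ) :
    (σ.filter (fun u => Odd (gg σ hσ u))).filter (fun u => ee σ hσ u = v)
      = ((Finset.range (bb σ hσ v)).filter (fun j => Even j)).image
          (fun j : ℕ => v - (j : ZMod N)) := by
  ext u
  simp only [Finset.mem_filter, Finset.mem_image, Finset.mem_range]
  constructor
  · rintro ⟨⟨hu, hodd⟩, he⟩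
    refine ⟨gg σ hσ u - 1, ⟨ggsub1_lt hσ hu he, ?_⟩, (eq_sub hσ he).symm⟩
    obtain ⟨k, hk⟩ := hodd
    exact ⟨k, by omega⟩
  · rintro ⟨j, ⟨hj, hev⟩, rfl⟩
    have h1 := gg_sub hσ hv hj
    refine ⟨⟨mem_of_lt_bb hσ (mem_Ends.mp hv).1 hj, ?_⟩, ee_sub hσ hv hj⟩
    rw [h1]
    obtain ⟨k, hk⟩ := hev
    exact ⟨k, by omega⟩

include hσ in
lemma two_mul_tau :
    2 * (σ.filter (fun u => Odd (gg σ hσ u))).card = σ.card + omegaOdd N σ := by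
  rw [omega_eq hσ, card_eq_sum_bb hσ]
  rw [Finset.card_eq_sum_card_fiberwise (f := ee σ hσ) (t := Ends σ)
    (fun x hx => ee_mem_Ends hσ (Finset.mem_filter.mp hx).1)]
  have hterm : ∀ v ∈ Ends σ,
      ((σ.filter (fun u => Odd (gg σ hσ u))).filter (fun u => ee σ hσ u = v)).card
        = (bb σ hσ v + 1) / 2 := by
    intro v hv
    rw [fiberOdd_eq hσ hv,
      Finset.card_image_of_injOn ((injOn_sub (bb_le hσ v)).mono (by intro x hx; exact Finset.mem_coe.mpr (Finset.filter_subset _ _ (Finset.mem_coe.mp hx)))),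
      card_even_range]
  rw [Finset.sum_congr rfl hterm, Finset.mul_sum]
  have hcard : ((Ends σ).filter (fun v => Odd (bb σ hσ v))).card
      = ∑ v ∈ Ends σ, (if Odd (bb σ hσ v) then 1 else 0) := by
    rw [← Finset.sum_filter, Finset.card_eq_sum_ones]
  rw [hcard, ← Finset.sum_add_distrib]
  refine Finset.sum_congr rfl fun v hv => ?_
  rcases Nat.even_or_odd (bb σ hσ v) with h | h
  · rw [if_neg (Nat.not_odd_iff_even.mpr h)]
    obtain ⟨k, hk⟩ := h
    omega
  · rw [if_pos h]
    obtain ⟨k, hk⟩ := h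
    omega

/-- no two cyclically adjacent elements. -/
def Indep (σ : Finset (ZMod N)) : Prop := ∀ v ∈ σ, v + 1 ∉ σ

lemma Indep.subset {τ : Finset (ZMod N)} (h : Indep σ) (hτ : τ ⊆ σ) : Indep τ :=
  fun v hv hv1 => h v (hτ hv) (hτ hv1)

include hσ in
lemma indep_tau : Indep (σ.filter (fun u => Odd (gg σ hσ u))) := by
  intro v hv hv1
  obtain ⟨hvσ, hvo⟩ := Finset.mem_filter.mp hv
  obtain ⟨hv1σ, hv1o⟩ := Finset.mem_filter.mp hv1
  rw [gg_succ hσ hv1σ] at hvo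
  rw [Nat.odd_iff] at hvo hv1o
  omega

lemma indep_ne_univ (h : Indep σ) : σ ≠ Finset.univ := by
  intro hu
  exact h 0 (hu ▸ Finset.mem_univ 0) (by simpa using hu ▸ Finset.mem_univ (1 : ZMod N))

lemma Ends_indep (h : Indep σ) : Ends σ = σ :=
  Finset.filter_eq_self.mpr (fun v hv => h v hv)

lemma bb_indep (h : Indep σ) {v : ZMod N} (hv : v ∈ σ) : bb σ hσ v = 1 := by
  rw [bb, Nat.find_eq_iff]
  refine ⟨⟨one_pos, fun hc => ?_⟩, by omega⟩
  have : v - (1 : ℕ) + 1 ∉ σ := h _ (by simpa using hc)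
  simp at this
  exact this hv

lemma omega_indep (h : Indep σ) : omegaOdd N σ = σ.card := by
  have hσ' : σ ≠ Finset.univ := indep_ne_univ h
  rw [omega_eq hσ', Ends_indep h]
  rw [Finset.filter_eq_self.mpr (fun v hv => by rw [bb_indep hσ' h hv]; exact odd_one)]

lemma comps_indep (h : Indep σ) :
    Nat.card ((cycGraph N).induce (σ : Set (ZMod N))).ConnectedComponent = σ.card := by
  have hσ' : σ ≠ Finset.univ := indep_ne_univ h
  rw [card_components hσ', Ends_indep h]

include hσ in
lemma indep_of_card_comps
    (h : Nat.card ((cycGraph N).induce (σ : Set (ZMod N))).ConnectedComponent = σ.card) :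
    Indep σ := by
  rw [card_components hσ] at h
  have hsub : Ends σ ⊆ σ := Finset.filter_subset _ _
  have heq : Ends σ = σ := Finset.eq_of_subset_of_card_le hsub (le_of_eq h.symm)
  intro v hv
  rw [← heq] at hv
  exact (mem_Ends.mp hv).2

include hσ in
lemma omega_le_card : omegaOdd N σ ≤ σ.card := by
  rw [omega_eq hσ]
  calc ((Ends σ).filter (fun v => Odd (bb σ hσ v))).card
      ≤ (Ends σ).card := Finset.card_filter_le _ _
    _ ≤ σ.card := Finset.card_le_card (Finset.filter_subset _ _)

end

lemma natCast_inj_lt' {i j : ℕ} (hi : i < N) (hj : j < N) (h : (i : ZMod N) = j) : i = j :=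
  natCast_inj_lt hi hj h

lemma evens_card (n : ℕ) [NeZero (2*n)] :
    ((Finset.range n).image (fun i : ℕ => ((2*i : ℕ) : ZMod (2*n)))).card = n := by
  rw [Finset.card_image_of_injOn, Finset.card_range]
  intro i hi j hj hij
  simp only [Finset.coe_range, Set.mem_Iio] at hi hj
  simp only at hij
  have := natCast_inj_lt (N := 2*n) (i := 2*i) (j := 2*j) (by omega) (by omega) hij
  omega

lemma evens_indep (n : ℕ) [NeZero (2*n)] :
    Indep ((Finset.range n).image (fun i : ℕ => ((2*i : ℕ) : ZMod (2*n)))) := by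
  intro v hv hv1
  simp only [Finset.mem_image, Finset.mem_range] at hv hv1
  obtain ⟨i, hi, rfl⟩ := hv
  obtain ⟨j, hj, hj2⟩ := hv1
  have hc : ((2*i+1 : ℕ) : ZMod (2*n)) = ((2*j : ℕ) : ZMod (2*n)) := by
    push_cast
    push_cast at hj2
    linear_combination hj2.symm
  have := natCast_inj_lt (N := 2*n) (i := 2*i+1) (j := 2*j) (by omega) (by omega) hc
  omega

end CycAux

/-- The minimal non-faces of the boundary complex of the cyclic polytope `C_{2n−4}(2n)`
(faces characterized by Gale's evenness condition `|σ| + ω(σ) ≤ 2n−4`) are exactly the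
`(n−1)`-subsets `η ⊆ [2n]` whose induced subgraph of the `2n`-cycle has exactly `n−1`
connected components (i.e. `η` contains no two cyclically adjacent elements). -/
theorem stmt_11 (n : ℕ) (hn : 3 ≤ n) (η : Finset (ZMod (2 * n))) :
    (¬ (η.card + omegaOdd (2 * n) η ≤ 2 * n - 4) ∧
      ∀ τ ⊂ η, τ.card + omegaOdd (2 * n) τ ≤ 2 * n - 4) ↔
    (η.card = n - 1 ∧
      Nat.card ((cycGraph (2 * n)).induce (η : Set (ZMod (2 * n)))).ConnectedComponent
        = n - 1) := by
  haveI : NeZero (2 * n) := ⟨by omega⟩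
  haveI : Fact (1 < 2 * n) := ⟨by omega⟩
  constructor
  · rintro ⟨hnf, hmin⟩
    have hind : CycAux.Indep η := by
      by_contra hni
      by_cases hu : η = Finset.univ
      · have hτind := CycAux.evens_indep n
        have hτcard := CycAux.evens_card n
        have hτne : (Finset.range n).image (fun i : ℕ => ((2*i : ℕ) : ZMod (2*n))) ≠ Finset.univ := by
          intro h
          have h1 : ((Finset.range n).image (fun i : ℕ => ((2*i : ℕ) : ZMod (2*n)))).card = 2 * n := by rw [h, Finset.card_univ, ZMod.card]
          omega
        have hsub : (Finset.range n).image (fun i : ℕ => ((2*i : ℕ) : ZMod (2*n))) ⊂ η := by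
          rw [hu]
          exact Finset.ssubset_univ_iff.mpr hτne
        have hface := hmin _ hsub
        rw [CycAux.omega_indep hτind, hτcard] at hface
        omega
      · have h2 := CycAux.two_mul_tau hu
        have hτind := CycAux.indep_tau hu
        have hτsub : η.filter (fun u => Odd (CycAux.gg η hu u)) ⊆ η := Finset.filter_subset _ _
        have hτne : η.filter (fun u => Odd (CycAux.gg η hu u)) ≠ η := fun he => hni (he ▸ hτind)
        have hface := hmin _ (Finset.ssubset_iff_subset_ne.mpr ⟨hτsub, hτne⟩)
        rw [CycAux.omega_indep hτind] at hface
        omega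
    have hω := CycAux.omega_indep hind
    have hcard_le : η.card ≤ n - 1 := by
      by_contra hgt
      push_neg at hgt
      have hne : η.Nonempty := Finset.card_pos.mp (by omega)
      obtain ⟨x, hx⟩ := hne
      have hface := hmin _ (Finset.erase_ssubset hx)
      rw [CycAux.omega_indep (hind.subset (Finset.erase_subset _ _)),
        Finset.card_erase_of_mem hx] at hface
      omega
    have hcard : η.card = n - 1 := by omega
    exact ⟨hcard, by rw [CycAux.comps_indep hind, hcard]⟩
  · rintro ⟨hcard, hcomp⟩
    have hu : η ≠ Finset.univ := by
      intro h
      have h1 : η.card = 2 * n := by rw [h, Finset.card_univ, ZMod.card]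
      omega
    have hind := CycAux.indep_of_card_comps hu (by rw [hcomp, hcard])
    constructor
    · rw [CycAux.omega_indep hind, hcard]
      omega
    · intro τ hτ
      have hτind := hind.subset hτ.subset
      rw [CycAux.omega_indep hτind]
      have := Finset.card_lt_card hτ
      omega
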